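/- Suppose ε ≤ 1/4. Then the estimator decides sides correctly: on the event {τ < ∞, S_τ ≥ U_τ} one has p̂ > α, and on the event {τ < ∞, S_τ ≤ L_τ} one has p̂ ≤ α (indeed p̂ < α). -/

import Mathlib

open MeasureTheory ProbabilityTheory Filter Asymptotics
open scoped ENNReal

namespace SeqMC

variable {Ω : Type*} [MeasurableSpace Ω]

/-- Partial sums: `S n = X_1 + ⋯ + X_n`, where the i-th variable `X_i` is `X (i-1)`. -/
def S (X : ℕ → Ω → ℕ) (n : ℕ) (ω : Ω) : ℕ := ∑ i ∈ Finset.range n, X i ω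

/-- `X` is an i.i.d. Bernoulli(p) sequence under the probability measure `P`. -/
structure IsBernoulliSeq (P : Measure Ω) (p : ℝ) (X : ℕ → Ω → ℕ) : Prop where
  isProb : IsProbabilityMeasure P
  meas : ∀ i, Measurable (X i)
  bdd : ∀ i ω, X i ω ≤ 1
  indep : iIndepFun X P
  bern : ∀ i, P (X i ⁻¹' {1}) = ENNReal.ofReal p

/-- The walk stayed strictly between the boundaries at all steps `1 ≤ k ≤ n`, i.e. `τ > n`. -/
def notStopped (X : ℕ → Ω → ℕ) (U L : ℕ → ℤ) (n : ℕ) (ω : Ω) : Prop :=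
  ∀ k, 1 ≤ k → k ≤ n → L k < (S X k ω : ℤ) ∧ (S X k ω : ℤ) < U k

/-- The event `τ ≤ n` and `S_τ ≥ U_τ`. -/
def hitUpperBy (X : ℕ → Ω → ℕ) (U L : ℕ → ℤ) (n : ℕ) (ω : Ω) : Prop :=
  ∃ k, 1 ≤ k ∧ k ≤ n ∧ notStopped X U L (k - 1) ω ∧ U k ≤ (S X k ω : ℤ)

/-- The event `τ ≤ n` and `S_τ ≤ L_τ`. -/
def hitLowerBy (X : ℕ → Ω → ℕ) (U L : ℕ → ℤ) (n : ℕ) (ω : Ω) : Prop :=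
  ∃ k, 1 ≤ k ∧ k ≤ n ∧ notStopped X U L (k - 1) ω ∧ (S X k ω : ℤ) ≤ L k

/-- The recursively defined boundaries `(U_n, L_n)`: `U_1 = 2`, `L_1 = -1` and for `n ≥ 2`,
`U_n` is the least `j ∈ {1,2,…}` with `P_α(τ ≥ n, S_n ≥ j) + P_α(τ < n, S_τ ≥ U_τ) ≤ ε_n`,
`L_n` is the greatest `j ∈ ℤ` with `P_α(τ ≥ n, S_n ≤ j) + P_α(τ < n, S_τ ≤ L_τ) ≤ ε_n`.
Here `Pα` is the measure `P_α` and `εs` the spending sequence. -/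
noncomputable def bnd (Pα : Measure Ω) (X : ℕ → Ω → ℕ) (εs : ℕ → ℝ) : ℕ → ℤ × ℤ
  | 0 => (2, -1)
  | 1 => (2, -1)
  | n + 2 =>
      let U : ℕ → ℤ := fun k => if h : k < n + 2 then (bnd Pα X εs k).1 else 0
      let L : ℕ → ℤ := fun k => if h : k < n + 2 then (bnd Pα X εs k).2 else 0
      (sInf {j : ℤ | 1 ≤ j ∧
          Pα {ω | notStopped X U L (n + 1) ω ∧ j ≤ (S X (n + 2) ω : ℤ)} +
            Pα {ω | hitUpperBy X U L (n + 1) ω} ≤ ENNReal.ofReal (εs (n + 2))},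
       sSup {j : ℤ |
          Pα {ω | notStopped X U L (n + 1) ω ∧ (S X (n + 2) ω : ℤ) ≤ j} +
            Pα {ω | hitLowerBy X U L (n + 1) ω} ≤ ENNReal.ofReal (εs (n + 2))})
  termination_by n => n
  decreasing_by all_goals omega

/-- The upper boundary `U_n`. -/
noncomputable def Ub (Pα : Measure Ω) (X : ℕ → Ω → ℕ) (εs : ℕ → ℝ) (n : ℕ) : ℤ :=
  (bnd Pα X εs n).1

/-- The lower boundary `L_n`. -/
noncomputable def Lb (Pα : Measure Ω) (X : ℕ → Ω → ℕ) (εs : ℕ → ℝ) (n : ℕ) : ℤ :=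
  (bnd Pα X εs n).2

/-- The stopping time `τ = inf {k ≥ 1 : S_k ≥ U_k or S_k ≤ L_k}`, with `0` encoding `τ = ∞`. -/
noncomputable def tau (Pα : Measure Ω) (X : ℕ → Ω → ℕ) (εs : ℕ → ℝ) (ω : Ω) : ℕ :=
  sInf {k | 1 ≤ k ∧ ((S X k ω : ℤ) ≤ Lb Pα X εs k ∨ Ub Pα X εs k ≤ (S X k ω : ℤ))}

/-- `τ` as an extended nonneg real (`∞` when the algorithm never stops). -/
noncomputable def tauE (Pα : Measure Ω) (X : ℕ → Ω → ℕ) (εs : ℕ → ℝ) (ω : Ω) : ℝ≥0∞ :=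
  if tau Pα X εs ω = 0 then ⊤ else (tau Pα X εs ω : ℝ≥0∞)

/-- The event `τ < ∞` and `S_τ ≥ U_τ`. -/
def hitsUpper (Pα : Measure Ω) (X : ℕ → Ω → ℕ) (εs : ℕ → ℝ) (ω : Ω) : Prop :=
  tau Pα X εs ω ≠ 0 ∧ Ub Pα X εs (tau Pα X εs ω) ≤ (S X (tau Pα X εs ω) ω : ℤ)

/-- The event `τ < ∞` and `S_τ ≤ L_τ`. -/
def hitsLower (Pα : Measure Ω) (X : ℕ → Ω → ℕ) (εs : ℕ → ℝ) (ω : Ω) : Prop :=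
  tau Pα X εs ω ≠ 0 ∧ (S X (tau Pα X εs ω) ω : ℤ) ≤ Lb Pα X εs (tau Pα X εs ω)

/-- The estimator `p̂ = S_τ/τ` (`= α` if `τ = ∞`). -/
noncomputable def phat (Pα : Measure Ω) (X : ℕ → Ω → ℕ) (εs : ℕ → ℝ) (α : ℝ) (ω : Ω) : ℝ :=
  if tau Pα X εs ω = 0 then α
  else (S X (tau Pα X εs ω) ω : ℝ) / (tau Pα X εs ω)



/-- The upper-tail binomial sum `P(Bin(n,p) ≥ m)` as a real polynomial. -/
noncomputable def fpoly (n m : ℕ) (p : ℝ) : ℝ :=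
  ∑ k ∈ Finset.Icc m n, (n.choose k : ℝ) * p ^ k * (1 - p) ^ (n - k)

lemma fpoly_hasDerivAt (n m : ℕ) (hm : 1 ≤ m) (hmn : m ≤ n) (p : ℝ) :
    HasDerivAt (fpoly n m)
      ((m : ℝ) * (n.choose m : ℝ) * p ^ (m - 1) * (1 - p) ^ (n - m)) p := by
  classical
  set A : ℕ → ℝ := fun k => (k : ℝ) * (n.choose k : ℝ) * p ^ (k - 1) * (1 - p) ^ (n - k) with hA
  have hterm : ∀ k ∈ Finset.Icc m n,
      HasDerivAt (fun q : ℝ => (n.choose k : ℝ) * q ^ k * (1 - q) ^ (n - k))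
        (A k - A (k + 1)) p := by
    intro k hk
    simp only [Finset.mem_Icc] at hk
    have h1 : HasDerivAt (fun q : ℝ => q ^ k) ((k : ℝ) * p ^ (k - 1)) p := hasDerivAt_pow k p
    have hs : HasDerivAt (fun q : ℝ => 1 - q) (-1) p := (hasDerivAt_id p).const_sub 1
    have h2 : HasDerivAt (fun q : ℝ => (1 - q) ^ (n - k))
        (((n - k : ℕ) : ℝ) * (1 - p) ^ (n - k - 1) * (-1)) p :=
      (hasDerivAt_pow (n - k) (1 - p)).comp p hs
    have h3 := (h1.mul h2).const_mul ((n.choose k : ℝ))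
    have hval : (n.choose k : ℝ) * ((k : ℝ) * p ^ (k - 1) * (1 - p) ^ (n - k) +
        p ^ k * (((n - k : ℕ) : ℝ) * (1 - p) ^ (n - k - 1) * (-1))) = A k - A (k + 1) := by
      have hcast : ((k + 1 : ℕ) : ℝ) * ((n.choose (k + 1) : ℕ) : ℝ)
          = (n.choose k : ℝ) * ((n - k : ℕ) : ℝ) := by
        rw [← Nat.cast_mul, ← Nat.cast_mul, mul_comm (k + 1) (n.choose (k + 1)),
          Nat.choose_succ_right_eq]
      have hexp : n - (k + 1) = n - k - 1 := by omega
      simp only [hA, hexp, Nat.add_sub_cancel]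
      rw [hcast]
      ring
    rw [← hval]
    simpa [mul_assoc] using h3
  have hsum : HasDerivAt (fpoly n m) (∑ k ∈ Finset.Icc m n, (A k - A (k + 1))) p := by
    have := HasDerivAt.fun_sum hterm
    exact this
  have htel : ∑ k ∈ Finset.Icc m n, (A k - A (k + 1)) = A m - A (n + 1) := by
    rw [← Finset.Ico_add_one_right_eq_Icc, Finset.sum_Ico_eq_sum_range]
    have h2 : ∀ i, A (m + i) - A (m + i + 1) = A (m + i) - A (m + (i + 1)) := by
      intro i; rw [Nat.add_assoc]
    simp only [h2]
    rw [Finset.sum_range_sub' (fun i => A (m + i))]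
    congr 2
    omega
  have hAn1 : A (n + 1) = 0 := by
    simp [hA, Nat.choose_eq_zero_of_lt (Nat.lt_succ_self n)]
  rw [htel, hAn1, sub_zero] at hsum
  exact hsum

lemma fpoly_differentiable (n m : ℕ) (hm : 1 ≤ m) (hmn : m ≤ n) :
    Differentiable ℝ (fpoly n m) := fun p => (fpoly_hasDerivAt n m hm hmn p).differentiableAt

lemma fpoly_monotoneOn (n m : ℕ) (hm : 1 ≤ m) (hmn : m ≤ n) :
    MonotoneOn (fpoly n m) (Set.Icc (0:ℝ) 1) := by
  apply monotoneOn_of_deriv_nonneg (convex_Icc 0 1)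
  · exact (fpoly_differentiable n m hm hmn).continuous.continuousOn
  · exact (fpoly_differentiable n m hm hmn).differentiableOn
  · intro x hx
    rw [interior_Icc, Set.mem_Ioo] at hx
    rw [(fpoly_hasDerivAt n m hm hmn x).deriv]
    have h1 : (0:ℝ) ≤ x := le_of_lt hx.1
    have h2 : (0:ℝ) ≤ 1 - x := by linarith [hx.2]
    positivity

lemma fpoly_zero (n m : ℕ) (hm : 1 ≤ m) : fpoly n m 0 = 0 := by
  apply Finset.sum_eq_zero
  intro k hk
  simp only [Finset.mem_Icc] at hk
  have : k ≠ 0 := by omega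
  simp [this]

lemma fpoly_one (n m : ℕ) (hmn : m ≤ n) : fpoly n m 1 = 1 := by
  unfold fpoly
  rw [Finset.sum_eq_single_of_mem n (by simp [Finset.mem_Icc, hmn])]
  · simp
  · intro k hk hkn
    simp only [Finset.mem_Icc] at hk
    have : n - k ≠ 0 := by omega
    simp [this]

/-- Key pointwise inequality (★★) for the binomial median. -/
lemma starstar (mm r : ℕ) {u x : ℝ} (hx : x = ((mm:ℝ)+1)/((mm:ℝ)+(r:ℝ)+2))
    (hu1 : x ≤ u) (hu2 : u < 1) :
    u ^ (2*mm+r+3) * (1-u) ^ (r+1) ≤ x ^ (2*mm+2) * (u - x^2) ^ (r+1) := by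
  set ma : ℝ := (mm:ℝ) + 1 with hma
  set na : ℝ := (mm:ℝ) + (r:ℝ) + 2 with hna
  have hma0 : 0 < ma := by positivity
  have hna0 : 0 < na := by positivity
  have hman : ma < na := by
    have : (0:ℝ) ≤ (r:ℝ) := Nat.cast_nonneg r
    simp only [hma, hna]; linarith
  have hx0 : 0 < x := by rw [hx]; positivity
  have hx1 : x < 1 := by
    rw [hx, div_lt_one hna0]; exact hman
  have hxn : na * x = ma := by
    rw [hx]; field_simp
  have hu0 : 0 < u := lt_of_lt_of_le hx0 hu1
  have hux2 : ∀ v : ℝ, x ≤ v → x^2 < v := fun v hv => by nlinarith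
  set bb : ℝ := na - ma with hbb
  have hbb0 : 0 < bb := by simp only [hbb]; linarith
  set Φ : ℝ → ℝ := fun w =>
    (2*ma) * Real.log x + bb * Real.log (w - x^2) - (na+ma) * Real.log w
      - bb * Real.log (1-w) with hΦ
  -- derivative of Φ
  have hder : ∀ v ∈ Set.Icc x u, HasDerivAt Φ
      (bb * ((v - x^2)⁻¹ * 1) - (na+ma) * v⁻¹ - bb * ((1-v)⁻¹ * (-1))) v := by
    intro v hv
    have hv0 : 0 < v := lt_of_lt_of_le hx0 hv.1
    have hv1 : v < 1 := lt_of_le_of_lt hv.2 hu2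
    have hvx2 : 0 < v - x^2 := sub_pos.2 (hux2 v hv.1)
    have d1 : HasDerivAt (fun w : ℝ => w - x^2) 1 v := (hasDerivAt_id v).sub_const _
    have dlog1 : HasDerivAt (fun w : ℝ => Real.log (w - x^2)) ((v - x^2)⁻¹ * 1) v :=
      by have := (Real.hasDerivAt_log (ne_of_gt hvx2)).comp v d1; exact this
    have dlog2 : HasDerivAt Real.log v⁻¹ v := Real.hasDerivAt_log (ne_of_gt hv0)
    have d3 : HasDerivAt (fun w : ℝ => 1 - w) (-1) v := (hasDerivAt_id v).const_sub 1
    have dlog3 : HasDerivAt (fun w : ℝ => Real.log (1 - w)) ((1-v)⁻¹ * (-1)) v :=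
      (Real.hasDerivAt_log (by linarith : (1:ℝ) - v ≠ 0)).comp v d3
    exact (((dlog1.const_mul bb).const_add _).sub (dlog2.const_mul (na+ma))).sub
      (dlog3.const_mul bb)
  -- derivative is nonneg
  have hdernn : ∀ v ∈ Set.Icc x u,
      0 ≤ bb * ((v - x^2)⁻¹ * 1) - (na+ma) * v⁻¹ - bb * ((1-v)⁻¹ * (-1)) := by
    intro v hv
    have hv0 : 0 < v := lt_of_lt_of_le hx0 hv.1
    have hv1 : v < 1 := lt_of_le_of_lt hv.2 hu2
    have hvx2 : 0 < v - x^2 := sub_pos.2 (hux2 v hv.1)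
    have h1v : 0 < 1 - v := by linarith
    have key : bb * ((v - x^2)⁻¹ * 1) - (na+ma) * v⁻¹ - bb * ((1-v)⁻¹ * (-1))
        = ((na+ma) * (v-x)^2) / (v * (1-v) * (v - x^2)) := by
      have hb : bb = na - na * x := by rw [hbb, hxn]
      have hma' : ma = na * x := hxn.symm
      rw [hb, hma']
      field_simp
      ring
    rw [key]
    positivity
  -- Φ x = 0
  have hΦx : Φ x = 0 := by
    have hxx : x - x^2 = x * (1-x) := by ring
    simp only [hΦ, hxx, Real.log_mul (ne_of_gt hx0) (by linarith : (1:ℝ) - x ≠ 0)]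
    ring
  -- Φ is monotone on [x,u], hence Φ u ≥ 0
  have hΦu : 0 ≤ Φ u := by
    have hmono : MonotoneOn Φ (Set.Icc x u) := by
      apply monotoneOn_of_deriv_nonneg (convex_Icc x u)
      · exact fun v hv => (hder v hv).continuousAt.continuousWithinAt
      · intro v hv
        rw [interior_Icc] at hv
        exact ((hder v (Set.mem_Icc_of_Ioo hv)).differentiableAt).differentiableWithinAt
      · intro v hv
        rw [interior_Icc] at hv
        have hv' := Set.mem_Icc_of_Ioo hv
        rw [(hder v hv').deriv]
        exact hdernn v hv'
    have := hmono (Set.left_mem_Icc.2 hu1) (Set.right_mem_Icc.2 hu1) hu1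
    rw [hΦx] at this
    exact this
  -- exponentiate
  have hu1' : 0 < 1 - u := by linarith
  have hux2' : 0 < u - x^2 := sub_pos.2 (hux2 u hu1)
  have hA : 0 < x ^ (2*mm+2) * (u - x^2) ^ (r+1) := by positivity
  have hB : 0 < u ^ (2*mm+r+3) * (1-u) ^ (r+1) := by positivity
  rw [← Real.log_le_log_iff hB hA]
  have hlogB : Real.log (u ^ (2*mm+r+3) * (1-u) ^ (r+1))
      = (na+ma) * Real.log u + bb * Real.log (1-u) := by
    rw [Real.log_mul (by positivity) (by positivity), Real.log_pow, Real.log_pow]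
    have h1 : ((2*mm+r+3 : ℕ):ℝ) = na + ma := by simp only [hna, hma]; push_cast; ring
    have h2 : ((r+1 : ℕ):ℝ) = bb := by simp only [hbb, hna, hma]; push_cast; ring
    rw [h1, h2]
  have hlogA : Real.log (x ^ (2*mm+2) * (u - x^2) ^ (r+1))
      = (2*ma) * Real.log x + bb * Real.log (u - x^2) := by
    rw [Real.log_mul (by positivity) (by positivity), Real.log_pow, Real.log_pow]
    have h1 : ((2*mm+2 : ℕ):ℝ) = 2*ma := by simp only [hma]; push_cast; ring
    have h2 : ((r+1 : ℕ):ℝ) = bb := by simp only [hbb, hna, hma]; push_cast; ring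
    rw [h1, h2]
  rw [hlogB, hlogA]
  have := hΦu
  simp only [hΦ] at this
  linarith

/-- The binomial upper tail at the (integer) mean is at least 1/2. -/
lemma half_le_fpoly_at_mean (mm r : ℕ) :
    1/2 ≤ fpoly (mm+r+2) (mm+1) (((mm+1 : ℕ):ℝ)/((mm+r+2 : ℕ):ℝ)) := by
  set n : ℕ := mm + r + 2 with hn
  set m : ℕ := mm + 1 with hm
  set x : ℝ := ((m : ℕ):ℝ)/((n : ℕ):ℝ) with hxd
  have hxeq : x = ((mm:ℝ)+1)/((mm:ℝ)+(r:ℝ)+2) := by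
    rw [hxd, hn, hm]; push_cast; ring_nf
  have hx0 : 0 < x := by rw [hxeq]; positivity
  have hx1 : x < 1 := by
    rw [hxeq, div_lt_one (by positivity)]
    have : (0:ℝ) ≤ (r:ℝ) := Nat.cast_nonneg r
    linarith
  set C : ℝ := (m:ℝ) * ((n.choose m : ℕ):ℝ) with hCd
  have hC0 : 0 ≤ C := by positivity
  set h : ℝ → ℝ := fun t => C * t^mm * (1-t)^(r+1) with hhd
  have hD : ∀ t : ℝ, HasDerivAt (fpoly n m) (h t) t := by
    intro t
    have h1 : m - 1 = mm := by omega
    have h2 : n - m = r + 1 := by omega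
    have := fpoly_hasDerivAt n m (by omega) (by omega) t
    rw [h1, h2] at this
    exact this
  have hCont : Continuous h := by
    apply Continuous.mul
    · exact (continuous_const.mul (continuous_pow mm))
    · exact (continuous_const.sub continuous_id).pow (r+1)
  have hII : ∀ a b : ℝ, IntervalIntegrable h MeasureTheory.volume a b :=
    fun a b => hCont.intervalIntegrable a b
  -- FTC
  have int1 : ∫ t in (0:ℝ)..x, h t = fpoly n m x := by
    rw [intervalIntegral.integral_eq_sub_of_hasDerivAt (fun t _ => hD t) (hII 0 x),
      fpoly_zero n m (by omega), sub_zero]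
  have int2 : ∫ t in x..(1:ℝ), h t = 1 - fpoly n m x := by
    rw [intervalIntegral.integral_eq_sub_of_hasDerivAt (fun t _ => hD t) (hII x 1),
      fpoly_one n m (by omega)]
  -- substitution
  have hne : ∀ u : ℝ, u ∈ Set.Icc x 1 → u ≠ 0 :=
    fun u hu => ne_of_gt (lt_of_lt_of_le hx0 hu.1)
  have hsub : ∫ u in x..(1:ℝ), (x^2/u^2) * h (x^2/u) = ∫ v in (x^2)..x, h v := by
    have hderiv_inv : ∀ u ∈ Set.uIcc x (1:ℝ), HasDerivAt (fun w => x^2/w) (-(x^2/u^2)) u := by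
      rw [Set.uIcc_of_le hx1.le]
      intro u hu
      have := (hasDerivAt_inv (hne u hu)).const_mul (x^2)
      simpa [div_eq_mul_inv, mul_neg] using this
    have hcontf' : ContinuousOn (fun u : ℝ => -(x^2/u^2)) (Set.uIcc x 1) := by
      rw [Set.uIcc_of_le hx1.le]
      exact (continuousOn_const.div ((continuous_pow 2).continuousOn)
        (fun u hu => pow_ne_zero 2 (hne u hu))).neg
    have key := intervalIntegral.integral_comp_smul_deriv hderiv_inv hcontf' hCont
    simp only [smul_eq_mul, Function.comp] at key
    have e1 : x^2/x = x := by rw [sq, mul_div_assoc, div_self (ne_of_gt hx0), mul_one]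
    have e2 : x^2/(1:ℝ) = x^2 := div_one _
    rw [e1, e2] at key
    have e3 : ∫ v in x..(x^2), h v = - ∫ v in (x^2)..x, h v :=
      intervalIntegral.integral_symm _ _
    rw [e3] at key
    simp only [neg_mul] at key
    rw [intervalIntegral.integral_neg] at key
    exact neg_injective key
  -- pointwise comparison on [x,1]
  have hpt : ∀ u ∈ Set.Icc x (1:ℝ), h u ≤ (x^2/u^2) * h (x^2/u) := by
    intro u hu
    have hu0 : 0 < u := lt_of_lt_of_le hx0 hu.1
    have htx : x^2/u ≤ x := by
      calc x^2/u ≤ x^2/x := div_le_div_of_nonneg_left (by positivity) hx0 hu.1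
        _ = x := by rw [sq, mul_div_assoc, div_self (ne_of_gt hx0), mul_one]
    have ht0 : 0 < x^2/u := by positivity
    rcases eq_or_lt_of_le hu.2 with hu1 | hu1
    · -- u = 1
      have hL : h u = 0 := by
        rw [hhd]; simp only [← hu1]
        simp
      rw [hL]
      have hge : (0:ℝ) ≤ 1 - x^2/u := by linarith [lt_of_le_of_lt htx hx1]
      apply mul_nonneg (by positivity)
      rw [hhd]
      exact mul_nonneg (mul_nonneg hC0 (pow_nonneg ht0.le mm)) (pow_nonneg hge (r+1))
    · -- u < 1 : use starstar
      have hss := starstar mm r hxeq hu.1 hu1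
      have hR : (x^2/u^2) * (C * (x^2/u)^mm * (1 - x^2/u)^(r+1))
          = C * (x^(2*mm+2) * (u - x^2)^(r+1)) / u^(mm+r+3) := by
        clear_value x
        have hu' : u ≠ 0 := hu0.ne'
        have h1u : 1 - x^2/u = (u - x^2)/u := by field_simp
        rw [h1u, div_pow, div_pow]
        field_simp
        ring
      simp only [hhd]
      rw [hR, le_div_iff₀ (by positivity : (0:ℝ) < u^(mm+r+3))]
      calc C * u^mm * (1-u)^(r+1) * u^(mm+r+3)
          = C * (u^(2*mm+r+3) * (1-u)^(r+1)) := by ring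
        _ ≤ C * (x^(2*mm+2) * (u - x^2)^(r+1)) := mul_le_mul_of_nonneg_left hss hC0
  -- integrability of the comparison function
  have hcontg2 : ContinuousOn (fun u : ℝ => (x^2/u^2) * h (x^2/u)) (Set.uIcc x 1) := by
    rw [Set.uIcc_of_le hx1.le]
    apply ContinuousOn.mul
    · exact continuousOn_const.div ((continuous_pow 2).continuousOn)
        (fun u hu => pow_ne_zero 2 (hne u hu))
    · exact hCont.comp_continuousOn
        (continuousOn_const.div continuousOn_id (fun u hu => hne u hu))
  have cmp1 : ∫ u in x..(1:ℝ), h u ≤ ∫ u in x..(1:ℝ), (x^2/u^2) * h (x^2/u) :=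
    intervalIntegral.integral_mono_on hx1.le (hII x 1) hcontg2.intervalIntegrable hpt
  have adj : (∫ t in (0:ℝ)..(x^2), h t) + ∫ t in (x^2)..x, h t = ∫ t in (0:ℝ)..x, h t :=
    intervalIntegral.integral_add_adjacent_intervals (hII 0 (x^2)) (hII (x^2) x)
  have nn : 0 ≤ ∫ t in (0:ℝ)..(x^2), h t := by
    apply intervalIntegral.integral_nonneg (by positivity : (0:ℝ) ≤ x^2)
    intro t ht
    have h1 : 0 ≤ t := ht.1
    have h2 : t ≤ x^2 := ht.2
    have h3 : x^2 ≤ 1 := by nlinarith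
    rw [hhd]
    have : (0:ℝ) ≤ 1 - t := by linarith
    positivity
  linarith [cmp1, hsub, int1, int2, adj, nn]

/-- Median lower bound: if `m ≤ n p` then `P(Bin(n,p) ≥ m) ≥ 1/2`. -/
lemma one_half_le_fpoly (n m : ℕ) (hm : 1 ≤ m) (hmn : m ≤ n) {p : ℝ} (hp1 : p ≤ 1)
    (hp : (m:ℝ) ≤ (n:ℝ) * p) : 1/2 ≤ fpoly n m p := by
  have hm0 : (0:ℝ) < m := by exact_mod_cast hm
  have hp0 : 0 ≤ p := by
    by_contra hcon
    push_neg at hcon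
    have : (n:ℝ) * p ≤ 0 := mul_nonpos_of_nonneg_of_nonpos (Nat.cast_nonneg n) hcon.le
    linarith
  rcases eq_or_lt_of_le hmn with rfl | hlt
  · have hp1' : p = 1 := by nlinarith
    rw [hp1', fpoly_one m m le_rfl]; norm_num
  · obtain ⟨mm, rfl⟩ : ∃ mm, m = mm + 1 := ⟨m - 1, by omega⟩
    obtain ⟨r, rfl⟩ : ∃ r, n = mm + r + 2 := ⟨n - mm - 2, by omega⟩
    have hkey := half_le_fpoly_at_mean mm r
    set x : ℝ := ((mm+1 : ℕ):ℝ)/((mm+r+2 : ℕ):ℝ) with hxd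
    have hden : (0:ℝ) < ((mm+r+2 : ℕ):ℝ) := by positivity
    have hx0 : 0 ≤ x := by positivity
    have hxp : x ≤ p := by
      rw [hxd, div_le_iff₀ hden]
      push_cast at hp ⊢
      linarith
    have hx1 : x ≤ 1 := le_trans hxp hp1
    have := fpoly_monotoneOn (mm+r+2) (mm+1) (by omega) (by omega)
      (Set.mem_Icc.2 ⟨hx0, hx1⟩) (Set.mem_Icc.2 ⟨hp0, hp1⟩) hxp
    linarith

/-- Reflection identity for the lower tail. -/
lemma lowsum_eq_fpoly (n K : ℕ) (hK : K ≤ n) (p : ℝ) :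
    ∑ k ∈ Finset.range (K+1), (n.choose k : ℝ) * p^k * (1-p)^(n-k)
      = fpoly n (n-K) (1-p) := by
  unfold fpoly
  apply Finset.sum_nbij' (i := fun k => n - k) (j := fun k => n - k)
  · intro a ha
    simp only [Finset.mem_range] at ha
    simp only [Finset.mem_Icc]
    omega
  · intro a ha
    simp only [Finset.mem_Icc] at ha
    simp only [Finset.mem_range]
    omega
  · intro a ha
    simp only [Finset.mem_range] at ha
    omega
  · intro a ha
    simp only [Finset.mem_Icc] at ha
    omega
  · intro a ha
    simp only [Finset.mem_range] at ha
    have ha' : a ≤ n := by omega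
    rw [Nat.choose_symm ha', sub_sub_cancel]
    have : n - (n - a) = a := by omega
    rw [this]
    ring


section Prob

variable {Ω : Type*} [MeasurableSpace Ω] {P : Measure Ω} {p : ℝ} {X : ℕ → Ω → ℕ}

lemma S_le_n (hb : ∀ i ω, X i ω ≤ 1) (n : ℕ) (ω : Ω) : S X n ω ≤ n := by
  unfold S
  calc ∑ i ∈ Finset.range n, X i ω ≤ ∑ _i ∈ Finset.range n, 1 :=
        Finset.sum_le_sum (fun i _ => hb i ω)
    _ = n := by simp

lemma measurable_S (hm : ∀ i, Measurable (X i)) (n : ℕ) : Measurable (S X n) :=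
  Finset.measurable_sum _ (fun i _ => hm i)

lemma prob_S_eq_ge (hB : IsBernoulliSeq P p X) (hp : 0 ≤ p) (hp1 : p ≤ 1)
    (n k : ℕ) (hk : k ≤ n) :
    ENNReal.ofReal ((n.choose k : ℝ) * p^k * (1-p)^(n-k)) ≤ P {ω | S X n ω = k} := by
  classical
  haveI := hB.isProb
  set E : Finset ℕ → Set Ω :=
    fun s => ⋂ i ∈ Finset.range n, X i ⁻¹' {if i ∈ s then 1 else 0} with hEd
  have hmeas : ∀ s, MeasurableSet (E s) := fun s =>
    MeasurableSet.biInter (Finset.range n).countable_toSet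
      (fun i _ => hB.meas i (measurableSet_singleton _))
  have hP0 : ∀ i, P (X i ⁻¹' {0}) = ENNReal.ofReal (1-p) := by
    intro i
    have hc : X i ⁻¹' {0} = (X i ⁻¹' {1})ᶜ := by
      ext ω
      simp only [Set.mem_preimage, Set.mem_singleton_iff, Set.mem_compl_iff]
      have := hB.bdd i ω
      omega
    rw [hc, prob_compl_eq_one_sub (hB.meas i (measurableSet_singleton _)), hB.bern i,
      ENNReal.ofReal_sub 1 hp, ENNReal.ofReal_one]
  have hPE : ∀ s ∈ Finset.powersetCard k (Finset.range n),
      P (E s) = ENNReal.ofReal p ^ k * ENNReal.ofReal (1-p) ^ (n-k) := by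
    intro s hs
    rw [Finset.mem_powersetCard] at hs
    have hprod := hB.indep.measure_inter_preimage_eq_mul (Finset.range n)
      (sets := fun i => ({if i ∈ s then 1 else 0} : Set ℕ))
      (fun i _ => measurableSet_singleton _)
    have hterm : ∀ i ∈ Finset.range n, P (X i ⁻¹' {if i ∈ s then 1 else 0})
        = if i ∈ s then ENNReal.ofReal p else ENNReal.ofReal (1-p) := by
      intro i _
      by_cases h : i ∈ s <;> simp [h, hB.bern i, hP0 i]
    rw [hEd]
    simp only []
    rw [hprod, Finset.prod_congr rfl hterm, Finset.prod_ite _ _,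
      Finset.prod_const, Finset.prod_const]
    have hfil1 : (Finset.range n).filter (fun i => i ∈ s) = s := by
      rw [Finset.filter_mem_eq_inter, Finset.inter_eq_right]
      exact hs.1
    have hfil2 : ((Finset.range n).filter (fun i => ¬ i ∈ s)).card = n - k := by
      have := Finset.card_filter_add_card_filter_not
        (s := Finset.range n) (p := fun i => i ∈ s)
      rw [hfil1] at this
      simp only [Finset.card_range] at this
      omega
    rw [hfil1, hfil2, hs.2]
  have hdisj : (↑(Finset.powersetCard k (Finset.range n)) : Set (Finset ℕ)).PairwiseDisjoint E := by
    intro s hs t ht hst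
    simp only [Finset.mem_coe, Finset.mem_powersetCard] at hs ht
    simp only [Function.onFun]
    rw [Set.disjoint_left]
    intro ω hωs hωt
    apply hst
    simp only [hEd, Set.mem_iInter, Set.mem_preimage, Set.mem_singleton_iff] at hωs hωt
    ext i
    constructor
    · intro hi
      have hir : i ∈ Finset.range n := hs.1 hi
      have h1 := hωs i hir
      have h2 := hωt i hir
      rw [if_pos hi] at h1
      by_contra hit
      rw [if_neg hit] at h2
      omega
    · intro hi
      have hir : i ∈ Finset.range n := ht.1 hi
      have h1 := hωs i hir
      have h2 := hωt i hir
      rw [if_pos hi] at h2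
      by_contra hit
      rw [if_neg hit] at h1
      omega
  have hsub : (⋃ s ∈ Finset.powersetCard k (Finset.range n), E s) ⊆ {ω | S X n ω = k} := by
    intro ω hω
    simp only [Set.mem_iUnion] at hω
    obtain ⟨s, hs, hωs⟩ := hω
    rw [Finset.mem_powersetCard] at hs
    simp only [hEd, Set.mem_iInter, Set.mem_preimage, Set.mem_singleton_iff] at hωs
    simp only [Set.mem_setOf_eq]
    unfold S
    rw [Finset.sum_congr rfl (fun i hi => hωs i hi), Finset.sum_boole]
    simp only [Nat.cast_id]
    rw [Finset.filter_mem_eq_inter, Finset.inter_eq_right.2 hs.1, hs.2]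
  calc ENNReal.ofReal ((n.choose k : ℝ) * p^k * (1-p)^(n-k))
      = (n.choose k : ℝ≥0∞) * (ENNReal.ofReal p ^ k * ENNReal.ofReal (1-p) ^ (n-k)) := by
        rw [ENNReal.ofReal_mul (by positivity), ENNReal.ofReal_mul (by positivity),
          ENNReal.ofReal_pow hp, ENNReal.ofReal_pow (by linarith), ENNReal.ofReal_natCast,
          mul_assoc]
    _ = ∑ s ∈ Finset.powersetCard k (Finset.range n), P (E s) := by
        rw [Finset.sum_congr rfl hPE, Finset.sum_const, Finset.card_powersetCard,
          Finset.card_range, nsmul_eq_mul]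
    _ = P (⋃ s ∈ Finset.powersetCard k (Finset.range n), E s) :=
        (measure_biUnion_finset hdisj (fun s _ => hmeas s)).symm
    _ ≤ P {ω | S X n ω = k} := measure_mono hsub

lemma prob_S_ge_tail (hB : IsBernoulliSeq P p X) (hp : 0 ≤ p) (hp1 : p ≤ 1)
    (n m : ℕ) (_hmn : m ≤ n) :
    ENNReal.ofReal (fpoly n m p) ≤ P {ω | m ≤ S X n ω} := by
  have hdisj : (↑(Finset.Icc m n) : Set ℕ).PairwiseDisjoint
      (fun k => {ω | S X n ω = k}) := by
    intro a _ b _ hab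
    simp only [Function.onFun]
    rw [Set.disjoint_left]
    intro ω ha hb
    exact hab (ha.symm.trans hb)
  calc ENNReal.ofReal (fpoly n m p)
      = ∑ k ∈ Finset.Icc m n, ENNReal.ofReal ((n.choose k : ℝ) * p^k * (1-p)^(n-k)) := by
        apply ENNReal.ofReal_sum_of_nonneg
        intro k _
        have : (0:ℝ) ≤ 1 - p := by linarith
        positivity
    _ ≤ ∑ k ∈ Finset.Icc m n, P {ω | S X n ω = k} := by
        apply Finset.sum_le_sum
        intro k hk
        exact prob_S_eq_ge hB hp hp1 n k (Finset.mem_Icc.1 hk).2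
    _ = P (⋃ k ∈ Finset.Icc m n, {ω | S X n ω = k}) :=
        (measure_biUnion_finset hdisj
          (fun k _ => measurable_S hB.meas n (measurableSet_singleton k))).symm
    _ ≤ P {ω | m ≤ S X n ω} := by
        apply measure_mono
        intro ω hω
        simp only [Set.mem_iUnion] at hω
        obtain ⟨k, hk, hωk⟩ := hω
        simp only [Set.mem_setOf_eq] at hωk ⊢
        rw [hωk]
        exact (Finset.mem_Icc.1 hk).1

lemma prob_S_le_tail (hB : IsBernoulliSeq P p X) (hp : 0 ≤ p) (hp1 : p ≤ 1)
    (n K : ℕ) (hK : K ≤ n) :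
    ENNReal.ofReal (fpoly n (n-K) (1-p)) ≤ P {ω | S X n ω ≤ K} := by
  rw [← lowsum_eq_fpoly n K hK p]
  have hdisj : (↑(Finset.range (K+1)) : Set ℕ).PairwiseDisjoint
      (fun k => {ω | S X n ω = k}) := by
    intro a _ b _ hab
    simp only [Function.onFun]
    rw [Set.disjoint_left]
    intro ω ha hb
    exact hab (ha.symm.trans hb)
  calc ENNReal.ofReal (∑ k ∈ Finset.range (K+1), (n.choose k : ℝ) * p^k * (1-p)^(n-k))
      = ∑ k ∈ Finset.range (K+1), ENNReal.ofReal ((n.choose k : ℝ) * p^k * (1-p)^(n-k)) := by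
        apply ENNReal.ofReal_sum_of_nonneg
        intro k _
        have : (0:ℝ) ≤ 1 - p := by linarith
        positivity
    _ ≤ ∑ k ∈ Finset.range (K+1), P {ω | S X n ω = k} := by
        apply Finset.sum_le_sum
        intro k hk
        rw [Finset.mem_range] at hk
        exact prob_S_eq_ge hB hp hp1 n k (by omega)
    _ = P (⋃ k ∈ Finset.range (K+1), {ω | S X n ω = k}) := by
        refine (measure_biUnion_finset hdisj
          (fun k _ => measurable_S hB.meas n (measurableSet_singleton k))).symm
    _ ≤ P {ω | S X n ω ≤ K} := by
        apply measure_mono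
        intro ω hω
        simp only [Set.mem_iUnion] at hω
        obtain ⟨k, hk, hωk⟩ := hω
        simp only [Set.mem_setOf_eq] at hωk ⊢
        rw [hωk]
        exact Nat.lt_succ_iff.1 (Finset.mem_range.1 hk)

/-- Median fact, upper side: if `1 ≤ j ≤ np` then `P(S_n ≥ j) ≥ 1/2`. -/
lemma fact_upper (hB : IsBernoulliSeq P p X) (hp : 0 ≤ p) (hp1 : p ≤ 1)
    {n : ℕ} {j : ℤ} (hj1 : 1 ≤ j) (hj : (j:ℝ) ≤ (n:ℝ) * p) :
    ENNReal.ofReal (1/2) ≤ P {ω | j ≤ (S X n ω : ℤ)} := by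
  set m : ℕ := j.toNat with hmd
  have hjm : (m : ℤ) = j := Int.toNat_of_nonneg (by omega)
  have hmr : (m : ℝ) = (j:ℝ) := by exact_mod_cast congrArg (Int.cast : ℤ → ℝ) hjm
  have hmn : m ≤ n := by
    by_contra hcon
    push_neg at hcon
    have h1 : (n:ℝ) * p ≤ (n:ℝ) := by nlinarith [Nat.cast_nonneg (α := ℝ) n]
    have h2 : (n:ℝ) + 1 ≤ (m:ℝ) := by exact_mod_cast hcon
    linarith
  have hev : {ω | j ≤ (S X n ω : ℤ)} = {ω | m ≤ S X n ω} := by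
    ext ω
    simp only [Set.mem_setOf_eq, ← hjm]
    exact_mod_cast Iff.rfl
  rw [hev]
  refine le_trans ?_ (prob_S_ge_tail hB hp hp1 n m hmn)
  apply ENNReal.ofReal_le_ofReal
  exact one_half_le_fpoly n m (by omega) hmn hp1 (by rw [hmr]; exact hj)

/-- Median fact, lower side: if `j ≥ np`, `j ≥ 0` then `P(S_n ≤ j) ≥ 1/2`. -/
lemma fact_lower (hB : IsBernoulliSeq P p X) (hp : 0 ≤ p) (hp1 : p ≤ 1)
    {n : ℕ} {j : ℤ} (hj0 : 0 ≤ j) (hj : (n:ℝ) * p ≤ (j:ℝ)) :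
    ENNReal.ofReal (1/2) ≤ P {ω | (S X n ω : ℤ) ≤ j} := by
  haveI := hB.isProb
  by_cases hjn : (n:ℤ) ≤ j
  · have hev : {ω | (S X n ω : ℤ) ≤ j} = Set.univ := by
      ext ω
      simp only [Set.mem_setOf_eq, Set.mem_univ, iff_true]
      have := S_le_n hB.bdd n ω
      omega
    rw [hev, measure_univ]
    exact ENNReal.ofReal_le_one.2 (by norm_num)
  · push_neg at hjn
    set K : ℕ := j.toNat with hKd
    have hjK : (K : ℤ) = j := Int.toNat_of_nonneg hj0
    have hKr : (K : ℝ) = (j:ℝ) := by exact_mod_cast congrArg (Int.cast : ℤ → ℝ) hjK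
    have hKn : K < n := by omega
    have hev : {ω | (S X n ω : ℤ) ≤ j} = {ω | S X n ω ≤ K} := by
      ext ω
      simp only [Set.mem_setOf_eq, ← hjK]
      exact_mod_cast Iff.rfl
    rw [hev]
    refine le_trans ?_ (prob_S_le_tail hB hp hp1 n K hKn.le)
    apply ENNReal.ofReal_le_ofReal
    apply one_half_le_fpoly n (n-K) (by omega) (by omega) (by linarith)
    have hcast : ((n - K : ℕ) : ℝ) = (n:ℝ) - (K:ℝ) := by
      exact_mod_cast Nat.cast_sub hKn.le
    rw [hcast, hKr]
    nlinarith [hj]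

end Prob

section Boundary

variable {Ω : Type*} [MeasurableSpace Ω] (Pα : Measure Ω) (X : ℕ → Ω → ℕ) (εs : ℕ → ℝ)

lemma bnd_zero : bnd Pα X εs 0 = (2, -1) := by rw [bnd]

lemma bnd_one : bnd Pα X εs 1 = (2, -1) := by rw [bnd]

/-- The defining set for `U_N`, `N ≥ 2`. -/
def USet (N : ℕ) : Set ℤ :=
  {j : ℤ | 1 ≤ j ∧
    Pα {ω | notStopped X (Ub Pα X εs) (Lb Pα X εs) (N-1) ω ∧ j ≤ (S X N ω : ℤ)} +
      Pα {ω | hitUpperBy X (Ub Pα X εs) (Lb Pα X εs) (N-1) ω} ≤ ENNReal.ofReal (εs N)}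

/-- The defining set for `L_N`, `N ≥ 2`. -/
def LSet (N : ℕ) : Set ℤ :=
  {j : ℤ |
    Pα {ω | notStopped X (Ub Pα X εs) (Lb Pα X εs) (N-1) ω ∧ (S X N ω : ℤ) ≤ j} +
      Pα {ω | hitLowerBy X (Ub Pα X εs) (Lb Pα X εs) (N-1) ω} ≤ ENNReal.ofReal (εs N)}

variable {X}

lemma notStopped_congr {U U' L L' : ℕ → ℤ} {N : ℕ} {ω : Ω}
    (hU : ∀ k, 1 ≤ k → k ≤ N → U k = U' k) (hL : ∀ k, 1 ≤ k → k ≤ N → L k = L' k) :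
    notStopped X U L N ω ↔ notStopped X U' L' N ω := by
  constructor
  · intro h k h1 h2
    rw [← hU k h1 h2, ← hL k h1 h2]
    exact h k h1 h2
  · intro h k h1 h2
    rw [hU k h1 h2, hL k h1 h2]
    exact h k h1 h2

lemma hitUpperBy_congr {U U' L L' : ℕ → ℤ} {N : ℕ} {ω : Ω}
    (hU : ∀ k, 1 ≤ k → k ≤ N → U k = U' k) (hL : ∀ k, 1 ≤ k → k ≤ N → L k = L' k) :
    hitUpperBy X U L N ω ↔ hitUpperBy X U' L' N ω := by
  constructor
  · rintro ⟨k, h1, h2, h3, h4⟩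
    exact ⟨k, h1, h2,
      (notStopped_congr (fun k' a b => hU k' a (by omega)) (fun k' a b => hL k' a (by omega))).1 h3,
      hU k h1 h2 ▸ h4⟩
  · rintro ⟨k, h1, h2, h3, h4⟩
    exact ⟨k, h1, h2,
      (notStopped_congr (fun k' a b => hU k' a (by omega)) (fun k' a b => hL k' a (by omega))).2 h3,
      (hU k h1 h2).symm ▸ h4⟩

lemma hitLowerBy_congr {U U' L L' : ℕ → ℤ} {N : ℕ} {ω : Ω}
    (hU : ∀ k, 1 ≤ k → k ≤ N → U k = U' k) (hL : ∀ k, 1 ≤ k → k ≤ N → L k = L' k) :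
    hitLowerBy X U L N ω ↔ hitLowerBy X U' L' N ω := by
  constructor
  · rintro ⟨k, h1, h2, h3, h4⟩
    exact ⟨k, h1, h2,
      (notStopped_congr (fun k' a b => hU k' a (by omega)) (fun k' a b => hL k' a (by omega))).1 h3,
      hL k h1 h2 ▸ h4⟩
  · rintro ⟨k, h1, h2, h3, h4⟩
    exact ⟨k, h1, h2,
      (notStopped_congr (fun k' a b => hU k' a (by omega)) (fun k' a b => hL k' a (by omega))).2 h3,
      (hL k h1 h2).symm ▸ h4⟩

variable (X)

lemma Ub_Lb_eq (N : ℕ) (hN : 2 ≤ N) :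
    Ub Pα X εs N = sInf (USet Pα X εs N) ∧ Lb Pα X εs N = sSup (LSet Pα X εs N) := by
  obtain ⟨n, rfl⟩ : ∃ n, N = n + 2 := ⟨N - 2, by omega⟩
  have hU' : ∀ k, 1 ≤ k → k ≤ n + 1 →
      (fun k => if _h : k < n + 2 then (bnd Pα X εs k).1 else 0) k = Ub Pα X εs k := by
    intro k _ h2
    simp only [Ub]
    rw [dif_pos (by omega)]
  have hL' : ∀ k, 1 ≤ k → k ≤ n + 1 →
      (fun k => if _h : k < n + 2 then (bnd Pα X εs k).2 else 0) k = Lb Pα X εs k := by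
    intro k _ h2
    simp only [Lb]
    rw [dif_pos (by omega)]
  constructor
  · show (bnd Pα X εs (n+2)).1 = _
    rw [bnd]
    simp only [USet, show n + 2 - 1 = n + 1 from rfl]
    congr 2
    ext j
    constructor
    · rintro ⟨h1, h2⟩
      refine ⟨h1, ?_⟩
      have e1 : {ω | notStopped X (fun k => if _h : k < n + 2 then (bnd Pα X εs k).1 else 0)
            (fun k => if _h : k < n + 2 then (bnd Pα X εs k).2 else 0) (n+1) ω ∧
            j ≤ (S X (n+2) ω : ℤ)}
          = {ω | notStopped X (Ub Pα X εs) (Lb Pα X εs) (n+1) ω ∧ j ≤ (S X (n+2) ω : ℤ)} := by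
        ext ω
        simp only [Set.mem_setOf_eq]
        exact and_congr_left' (notStopped_congr hU' hL')
      have e2 : {ω | hitUpperBy X (fun k => if _h : k < n + 2 then (bnd Pα X εs k).1 else 0)
            (fun k => if _h : k < n + 2 then (bnd Pα X εs k).2 else 0) (n+1) ω}
          = {ω | hitUpperBy X (Ub Pα X εs) (Lb Pα X εs) (n+1) ω} := by
        ext ω
        exact hitUpperBy_congr hU' hL'
      rw [← e1, ← e2]
      exact h2
    · rintro ⟨h1, h2⟩
      refine ⟨h1, ?_⟩
      have e1 : {ω | notStopped X (fun k => if _h : k < n + 2 then (bnd Pα X εs k).1 else 0)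
            (fun k => if _h : k < n + 2 then (bnd Pα X εs k).2 else 0) (n+1) ω ∧
            j ≤ (S X (n+2) ω : ℤ)}
          = {ω | notStopped X (Ub Pα X εs) (Lb Pα X εs) (n+1) ω ∧ j ≤ (S X (n+2) ω : ℤ)} := by
        ext ω
        simp only [Set.mem_setOf_eq]
        exact and_congr_left' (notStopped_congr hU' hL')
      have e2 : {ω | hitUpperBy X (fun k => if _h : k < n + 2 then (bnd Pα X εs k).1 else 0)
            (fun k => if _h : k < n + 2 then (bnd Pα X εs k).2 else 0) (n+1) ω}
          = {ω | hitUpperBy X (Ub Pα X εs) (Lb Pα X εs) (n+1) ω} := by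
        ext ω
        exact hitUpperBy_congr hU' hL'
      rw [e1, e2]
      exact h2
  · show (bnd Pα X εs (n+2)).2 = _
    rw [bnd]
    simp only [LSet, show n + 2 - 1 = n + 1 from rfl]
    congr 2
    ext j
    have e1 : {ω | notStopped X (fun k => if _h : k < n + 2 then (bnd Pα X εs k).1 else 0)
          (fun k => if _h : k < n + 2 then (bnd Pα X εs k).2 else 0) (n+1) ω ∧
          (S X (n+2) ω : ℤ) ≤ j}
        = {ω | notStopped X (Ub Pα X εs) (Lb Pα X εs) (n+1) ω ∧ (S X (n+2) ω : ℤ) ≤ j} := by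
      ext ω
      simp only [Set.mem_setOf_eq]
      exact and_congr_left' (notStopped_congr hU' hL')
    have e2 : {ω | hitLowerBy X (fun k => if _h : k < n + 2 then (bnd Pα X εs k).1 else 0)
          (fun k => if _h : k < n + 2 then (bnd Pα X εs k).2 else 0) (n+1) ω}
        = {ω | hitLowerBy X (Ub Pα X εs) (Lb Pα X εs) (n+1) ω} := by
      ext ω
      exact hitLowerBy_congr hU' hL'
    rw [e1, e2]

variable {Pα X εs}

/-- Every path is either still running, or has hit the upper/lower boundary. -/
lemma cover (U L : ℕ → ℤ) (N : ℕ) (ω : Ω) :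
    notStopped X U L N ω ∨ hitUpperBy X U L N ω ∨ hitLowerBy X U L N ω := by
  classical
  by_cases h : notStopped X U L N ω
  · exact Or.inl h
  · unfold notStopped at h
    push_neg at h
    obtain ⟨k, h1, h2, h3⟩ := h
    have hQ : ∃ k, 1 ≤ k ∧ k ≤ N ∧ ((S X k ω : ℤ) ≤ L k ∨ U k ≤ (S X k ω : ℤ)) := by
      refine ⟨k, h1, h2, ?_⟩
      by_cases hc : L k < (S X k ω : ℤ)
      · exact Or.inr (h3 hc)
      · exact Or.inl (by omega)
    let k0 := Nat.find hQ
    have hk0 := Nat.find_spec hQ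
    have hns : notStopped X U L (k0 - 1) ω := by
      intro k' h1' h2'
      by_contra hcon
      have hQk' : 1 ≤ k' ∧ k' ≤ N ∧ ((S X k' ω : ℤ) ≤ L k' ∨ U k' ≤ (S X k' ω : ℤ)) := by
        refine ⟨h1', by omega, ?_⟩
        by_cases hc : L k' < (S X k' ω : ℤ)
        · exact Or.inr (by omega)
        · exact Or.inl (by omega)
      exact Nat.find_min hQ (by omega) hQk'
    rcases hk0.2.2 with hl | hu
    · exact Or.inr (Or.inr ⟨k0, hk0.1, hk0.2.1, hns, hl⟩)
    · exact Or.inr (Or.inl ⟨k0, hk0.1, hk0.2.1, hns, hu⟩)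

lemma S_one (ω : Ω) : S X 1 ω = X 0 ω := by
  simp [S]

lemma hitUpperBy_one_empty (hbdd : ∀ i ω, X i ω ≤ 1) :
    {ω : Ω | hitUpperBy X (Ub Pα X εs) (Lb Pα X εs) 1 ω} = ∅ := by
  ext ω
  simp only [Set.mem_setOf_eq, Set.mem_empty_iff_false, iff_false]
  rintro ⟨k, h1, h2, _, h4⟩
  have hk : k = 1 := by omega
  subst hk
  have hU1 : Ub Pα X εs 1 = 2 := by rw [Ub, bnd_one]
  rw [hU1, S_one] at h4
  have := hbdd 0 ω
  omega

lemma hitLowerBy_one_empty :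
    {ω : Ω | hitLowerBy X (Ub Pα X εs) (Lb Pα X εs) 1 ω} = ∅ := by
  ext ω
  simp only [Set.mem_setOf_eq, Set.mem_empty_iff_false, iff_false]
  rintro ⟨k, h1, h2, _, h4⟩
  have hk : k = 1 := by omega
  subst hk
  have hL1 : Lb Pα X εs 1 = -1 := by rw [Lb, bnd_one]
  rw [hL1] at h4
  omega

end Boundary

section Main

variable {Ω : Type*} [MeasurableSpace Ω] {Pα : Measure Ω} {X : ℕ → Ω → ℕ} {εs : ℕ → ℝ}
  {α ε : ℝ}

lemma USet_mem_self (hB : IsBernoulliSeq Pα α X) (hmono : Monotone εs)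
    (N : ℕ) (hN : 2 ≤ N)
    (hprevU : Pα {ω | hitUpperBy X (Ub Pα X εs) (Lb Pα X εs) (N-1) ω}
      ≤ ENNReal.ofReal (εs (N-1))) :
    Ub Pα X εs N ∈ USet Pα X εs N := by
  rw [(Ub_Lb_eq Pα X εs N hN).1]
  apply Int.csInf_mem
  · refine ⟨(N:ℤ) + 1, by omega, ?_⟩
    have hempty : {ω | notStopped X (Ub Pα X εs) (Lb Pα X εs) (N-1) ω ∧
        ((N:ℤ) + 1 ≤ (S X N ω : ℤ))} = ∅ := by
      apply Set.eq_empty_iff_forall_notMem.2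
      rintro ω ⟨-, h⟩
      have := S_le_n hB.bdd N ω
      omega
    rw [hempty, measure_empty, zero_add]
    exact le_trans hprevU (ENNReal.ofReal_le_ofReal (hmono (by omega)))
  · exact ⟨1, fun j hj => hj.1⟩

lemma LSet_mem_self (hB : IsBernoulliSeq Pα α X) (hmono : Monotone εs)
    (hnn : ∀ n, 0 ≤ εs n) (hlt : ∀ n, εs n < ε) (hε4 : ε ≤ 1/4)
    (N : ℕ) (hN : 2 ≤ N)
    (hprevU : Pα {ω | hitUpperBy X (Ub Pα X εs) (Lb Pα X εs) (N-1) ω}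
      ≤ ENNReal.ofReal (εs (N-1)))
    (hprevL : Pα {ω | hitLowerBy X (Ub Pα X εs) (Lb Pα X εs) (N-1) ω}
      ≤ ENNReal.ofReal (εs (N-1))) :
    Lb Pα X εs N ∈ LSet Pα X εs N := by
  haveI := hB.isProb
  rw [(Ub_Lb_eq Pα X εs N hN).2]
  apply Int.csSup_mem
  · refine ⟨-1, ?_⟩
    have hempty : {ω | notStopped X (Ub Pα X εs) (Lb Pα X εs) (N-1) ω ∧
        ((S X N ω : ℤ) ≤ -1)} = ∅ := by
      apply Set.eq_empty_iff_forall_notMem.2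
      rintro ω ⟨-, h⟩
      omega
    show _ ∈ LSet Pα X εs N
    unfold LSet
    rw [Set.mem_setOf_eq, hempty, measure_empty, zero_add]
    exact le_trans hprevL (ENNReal.ofReal_le_ofReal (hmono (by omega)))
  · refine ⟨(N:ℤ) + 1, fun j hj => ?_⟩
    by_contra hcon
    push_neg at hcon
    have hj2 := hj.out
    have hsup : {ω | notStopped X (Ub Pα X εs) (Lb Pα X εs) (N-1) ω}
        ⊆ {ω | notStopped X (Ub Pα X εs) (Lb Pα X εs) (N-1) ω ∧ (S X N ω : ℤ) ≤ j} := by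
      intro ω hω
      refine ⟨hω, ?_⟩
      have := S_le_n hB.bdd N ω
      omega
    have hcov : (1:ℝ≥0∞) ≤ Pα {ω | notStopped X (Ub Pα X εs) (Lb Pα X εs) (N-1) ω}
        + (Pα {ω | hitUpperBy X (Ub Pα X εs) (Lb Pα X εs) (N-1) ω}
          + Pα {ω | hitLowerBy X (Ub Pα X εs) (Lb Pα X εs) (N-1) ω}) := by
      have huniv : (Set.univ : Set Ω) ⊆
          {ω | notStopped X (Ub Pα X εs) (Lb Pα X εs) (N-1) ω}
          ∪ ({ω | hitUpperBy X (Ub Pα X εs) (Lb Pα X εs) (N-1) ω}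
            ∪ {ω | hitLowerBy X (Ub Pα X εs) (Lb Pα X εs) (N-1) ω}) := by
        intro ω _
        rcases cover (Ub Pα X εs) (Lb Pα X εs) (N-1) ω with h | h | h
        exacts [Or.inl h, Or.inr (Or.inl h), Or.inr (Or.inr h)]
      calc (1:ℝ≥0∞) = Pα Set.univ := measure_univ.symm
        _ ≤ Pα (_ ∪ (_ ∪ _)) := measure_mono huniv
        _ ≤ _ + Pα (_ ∪ _) := measure_union_le _ _
        _ ≤ _ := add_le_add_right (measure_union_le _ _) _
    have hone : (1:ℝ≥0∞) ≤ ENNReal.ofReal (εs N) + ENNReal.ofReal (εs (N-1)) := by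
      calc (1:ℝ≥0∞) ≤ _ := hcov
        _ = (Pα {ω | notStopped X (Ub Pα X εs) (Lb Pα X εs) (N-1) ω}
            + Pα {ω | hitLowerBy X (Ub Pα X εs) (Lb Pα X εs) (N-1) ω})
            + Pα {ω | hitUpperBy X (Ub Pα X εs) (Lb Pα X εs) (N-1) ω} := by ring
        _ ≤ (Pα {ω | notStopped X (Ub Pα X εs) (Lb Pα X εs) (N-1) ω ∧ (S X N ω : ℤ) ≤ j}
            + Pα {ω | hitLowerBy X (Ub Pα X εs) (Lb Pα X εs) (N-1) ω})
            + Pα {ω | hitUpperBy X (Ub Pα X εs) (Lb Pα X εs) (N-1) ω} :=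
          add_le_add_left (add_le_add_left (measure_mono hsup) _) _
        _ ≤ ENNReal.ofReal (εs N) + ENNReal.ofReal (εs (N-1)) := add_le_add hj2 hprevU
    rw [← ENNReal.ofReal_add (hnn N) (hnn (N-1))] at hone
    have hlt1 : εs N + εs (N-1) < 1 := by
      have h1 := hlt N; have h2 := hlt (N-1); linarith
    exact absurd hone (not_le.2 (ENNReal.ofReal_lt_one.2 hlt1))

lemma hit_bounds (hB : IsBernoulliSeq Pα α X) (hmono : Monotone εs)
    (hnn : ∀ n, 0 ≤ εs n) (hlt : ∀ n, εs n < ε) (hε4 : ε ≤ 1/4) :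
    ∀ N, 1 ≤ N →
      Pα {ω | hitUpperBy X (Ub Pα X εs) (Lb Pα X εs) N ω} ≤ ENNReal.ofReal (εs N) ∧
      Pα {ω | hitLowerBy X (Ub Pα X εs) (Lb Pα X εs) N ω} ≤ ENNReal.ofReal (εs N) := by
  intro N hN
  induction N, hN using Nat.le_induction with
  | base =>
    rw [hitUpperBy_one_empty hB.bdd, hitLowerBy_one_empty]
    simp only [measure_empty]
    exact ⟨zero_le, zero_le⟩
  | succ N hN ih =>
    have hUm := USet_mem_self hB hmono (N+1) (by omega) (by simpa using ih.1)
    have hLm := LSet_mem_self hB hmono hnn hlt hε4 (N+1) (by omega)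
      (by simpa using ih.1) (by simpa using ih.2)
    have hUm2 := hUm.2
    have hLm2 := hLm.out
    simp only [Nat.add_sub_cancel] at hUm2 hLm2
    constructor
    · have hsub : {ω | hitUpperBy X (Ub Pα X εs) (Lb Pα X εs) (N+1) ω}
          ⊆ {ω | notStopped X (Ub Pα X εs) (Lb Pα X εs) N ω ∧
              Ub Pα X εs (N+1) ≤ (S X (N+1) ω : ℤ)}
            ∪ {ω | hitUpperBy X (Ub Pα X εs) (Lb Pα X εs) N ω} := by
        rintro ω ⟨k, h1, h2, h3, h4⟩
        rcases Nat.lt_or_ge k (N+1) with hk | hk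
        · exact Or.inr ⟨k, h1, by omega, h3, h4⟩
        · have hkk : k = N + 1 := by omega
          subst hkk
          exact Or.inl ⟨h3, h4⟩
      calc Pα {ω | hitUpperBy X (Ub Pα X εs) (Lb Pα X εs) (N+1) ω}
          ≤ Pα ({ω | notStopped X (Ub Pα X εs) (Lb Pα X εs) N ω ∧
                Ub Pα X εs (N+1) ≤ (S X (N+1) ω : ℤ)}
              ∪ {ω | hitUpperBy X (Ub Pα X εs) (Lb Pα X εs) N ω}) := measure_mono hsub
        _ ≤ _ + _ := measure_union_le _ _
        _ ≤ ENNReal.ofReal (εs (N+1)) := hUm2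
    · have hsub : {ω | hitLowerBy X (Ub Pα X εs) (Lb Pα X εs) (N+1) ω}
          ⊆ {ω | notStopped X (Ub Pα X εs) (Lb Pα X εs) N ω ∧
              (S X (N+1) ω : ℤ) ≤ Lb Pα X εs (N+1)}
            ∪ {ω | hitLowerBy X (Ub Pα X εs) (Lb Pα X εs) N ω} := by
        rintro ω ⟨k, h1, h2, h3, h4⟩
        rcases Nat.lt_or_ge k (N+1) with hk | hk
        · exact Or.inr ⟨k, h1, by omega, h3, h4⟩
        · have hkk : k = N + 1 := by omega
          subst hkk
          exact Or.inl ⟨h3, h4⟩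
      calc Pα {ω | hitLowerBy X (Ub Pα X εs) (Lb Pα X εs) (N+1) ω}
          ≤ Pα ({ω | notStopped X (Ub Pα X εs) (Lb Pα X εs) N ω ∧
                (S X (N+1) ω : ℤ) ≤ Lb Pα X εs (N+1)}
              ∪ {ω | hitLowerBy X (Ub Pα X εs) (Lb Pα X εs) N ω}) := measure_mono hsub
        _ ≤ _ + _ := measure_union_le _ _
        _ ≤ ENNReal.ofReal (εs (N+1)) := hLm2

lemma boundary_sep (hB : IsBernoulliSeq Pα α X) (hα : α ∈ Set.Ioo (0:ℝ) 1)
    (hmono : Monotone εs) (hnn : ∀ n, 0 ≤ εs n) (hlt : ∀ n, εs n < ε) (hε4 : ε ≤ 1/4)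
    (N : ℕ) (hN : 1 ≤ N) :
    α * (N:ℝ) < ((Ub Pα X εs N : ℤ) : ℝ) ∧ ((Lb Pα X εs N : ℤ) : ℝ) < α * (N:ℝ) := by
  rcases eq_or_lt_of_le hN with h1 | h2
  · -- N = 1
    have hN1 : N = 1 := h1.symm
    subst hN1
    have hU1 : Ub Pα X εs 1 = 2 := by rw [Ub, bnd_one]
    have hL1 : Lb Pα X εs 1 = -1 := by rw [Lb, bnd_one]
    rw [hU1, hL1]
    push_cast
    constructor <;> nlinarith [hα.1, hα.2]
  · -- N ≥ 2
    have hprev := hit_bounds hB hmono hnn hlt hε4 (N-1) (by omega)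
    have hUm := USet_mem_self hB hmono N (by omega) hprev.1
    have hLm := LSet_mem_self hB hmono hnn hlt hε4 N (by omega) hprev.1 hprev.2
    have hhalf : εs N + εs (N-1) < 1/2 := by
      have ha := hlt N; have hb := hlt (N-1); linarith
    constructor
    · by_contra hcon
      push_neg at hcon
      have hj1 : 1 ≤ Ub Pα X εs N := hUm.1
      have hfact := fact_upper hB hα.1.le hα.2.le hj1
        (by rw [mul_comm] at hcon; exact hcon)
      have hincl : {ω | Ub Pα X εs N ≤ (S X N ω : ℤ)}
          ⊆ {ω | notStopped X (Ub Pα X εs) (Lb Pα X εs) (N-1) ω ∧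
              Ub Pα X εs N ≤ (S X N ω : ℤ)}
            ∪ ({ω | hitUpperBy X (Ub Pα X εs) (Lb Pα X εs) (N-1) ω}
              ∪ {ω | hitLowerBy X (Ub Pα X εs) (Lb Pα X εs) (N-1) ω}) := by
        intro ω hω
        rcases cover (Ub Pα X εs) (Lb Pα X εs) (N-1) ω with h | h | h
        · exact Or.inl ⟨h, hω⟩
        · exact Or.inr (Or.inl h)
        · exact Or.inr (Or.inr h)
      have hchain : ENNReal.ofReal (1/2)
          ≤ ENNReal.ofReal (εs N) + ENNReal.ofReal (εs (N-1)) := by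
        calc ENNReal.ofReal (1/2) ≤ Pα {ω | Ub Pα X εs N ≤ (S X N ω : ℤ)} := hfact
          _ ≤ Pα ({ω | notStopped X (Ub Pα X εs) (Lb Pα X εs) (N-1) ω ∧
                Ub Pα X εs N ≤ (S X N ω : ℤ)}
              ∪ ({ω | hitUpperBy X (Ub Pα X εs) (Lb Pα X εs) (N-1) ω}
                ∪ {ω | hitLowerBy X (Ub Pα X εs) (Lb Pα X εs) (N-1) ω})) := measure_mono hincl
          _ ≤ _ + Pα (_ ∪ _) := measure_union_le _ _
          _ ≤ _ + (_ + _) := add_le_add_right (measure_union_le _ _) _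
          _ = (Pα {ω | notStopped X (Ub Pα X εs) (Lb Pα X εs) (N-1) ω ∧
                Ub Pα X εs N ≤ (S X N ω : ℤ)}
              + Pα {ω | hitUpperBy X (Ub Pα X εs) (Lb Pα X εs) (N-1) ω})
              + Pα {ω | hitLowerBy X (Ub Pα X εs) (Lb Pα X εs) (N-1) ω} := by ring
          _ ≤ ENNReal.ofReal (εs N) + ENNReal.ofReal (εs (N-1)) := add_le_add hUm.2 hprev.2
      rw [← ENNReal.ofReal_add (hnn N) (hnn (N-1))] at hchain
      exact absurd hchain (not_le.2
        ((ENNReal.ofReal_lt_ofReal_iff (by norm_num)).2 hhalf))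
    · by_contra hcon
      push_neg at hcon
      have hj0 : 0 ≤ Lb Pα X εs N := by
        have hNpos : (0:ℝ) < (N:ℝ) := by exact_mod_cast hN
        have : (0:ℝ) ≤ ((Lb Pα X εs N : ℤ) : ℝ) := by nlinarith [hα.1]
        exact_mod_cast this
      have hfact := fact_lower hB hα.1.le hα.2.le hj0
        (by rw [mul_comm] at hcon; exact hcon)
      have hincl : {ω | (S X N ω : ℤ) ≤ Lb Pα X εs N}
          ⊆ {ω | notStopped X (Ub Pα X εs) (Lb Pα X εs) (N-1) ω ∧
              (S X N ω : ℤ) ≤ Lb Pα X εs N}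
            ∪ ({ω | hitLowerBy X (Ub Pα X εs) (Lb Pα X εs) (N-1) ω}
              ∪ {ω | hitUpperBy X (Ub Pα X εs) (Lb Pα X εs) (N-1) ω}) := by
        intro ω hω
        rcases cover (Ub Pα X εs) (Lb Pα X εs) (N-1) ω with h | h | h
        · exact Or.inl ⟨h, hω⟩
        · exact Or.inr (Or.inr h)
        · exact Or.inr (Or.inl h)
      have hchain : ENNReal.ofReal (1/2)
          ≤ ENNReal.ofReal (εs N) + ENNReal.ofReal (εs (N-1)) := by
        calc ENNReal.ofReal (1/2) ≤ Pα {ω | (S X N ω : ℤ) ≤ Lb Pα X εs N} := hfact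
          _ ≤ Pα (_ ∪ (_ ∪ _)) := measure_mono hincl
          _ ≤ _ + Pα (_ ∪ _) := measure_union_le _ _
          _ ≤ _ + (_ + _) := add_le_add_right (measure_union_le _ _) _
          _ = (Pα {ω | notStopped X (Ub Pα X εs) (Lb Pα X εs) (N-1) ω ∧
                (S X N ω : ℤ) ≤ Lb Pα X εs N}
              + Pα {ω | hitLowerBy X (Ub Pα X εs) (Lb Pα X εs) (N-1) ω})
              + Pα {ω | hitUpperBy X (Ub Pα X εs) (Lb Pα X εs) (N-1) ω} := by ring
          _ ≤ ENNReal.ofReal (εs N) + ENNReal.ofReal (εs (N-1)) := add_le_add hLm.out hprev.1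
      rw [← ENNReal.ofReal_add (hnn N) (hnn (N-1))] at hchain
      exact absurd hchain (not_le.2
        ((ENNReal.ofReal_lt_ofReal_iff (by norm_num)).2 hhalf))

end Main


theorem statement_13 {Ω : Type*} [MeasurableSpace Ω]
    (α ε : ℝ) (hα : α ∈ Set.Ioo (0:ℝ) 1) (hε : ε ∈ Set.Ioo (0:ℝ) 1)
    (εs : ℕ → ℝ) (hεs0 : εs 0 = 0) (hmono : Monotone εs)
    (hnonneg : ∀ n, 0 ≤ εs n) (hlt : ∀ n, εs n < ε)
    (hlim : Filter.Tendsto εs Filter.atTop (nhds ε))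
    (P : ℝ → Measure Ω) (X : ℕ → Ω → ℕ)
    (hBern : ∀ p ∈ Set.Icc (0:ℝ) 1, IsBernoulliSeq (P p) p X)
    (hεq : ε ≤ 1 / 4) :
    ∀ ω : Ω, (hitsUpper (P α) X εs ω → α < phat (P α) X εs α ω) ∧
      (hitsLower (P α) X εs ω → phat (P α) X εs α ω < α) := by
  intro ω
  have hB : IsBernoulliSeq (P α) α X := hBern α ⟨hα.1.le, hα.2.le⟩
  have hsep := fun (N : ℕ) (hN : 1 ≤ N) =>
    boundary_sep hB hα hmono hnonneg hlt hεq N hN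
  constructor
  · rintro ⟨hne, hle⟩
    have hn1 : 1 ≤ tau (P α) X εs ω := Nat.one_le_iff_ne_zero.2 hne
    have hnpos : (0:ℝ) < (tau (P α) X εs ω : ℝ) := by exact_mod_cast hn1
    simp only [phat, if_neg hne]
    rw [lt_div_iff₀ hnpos]
    have h1 := (hsep _ hn1).1
    have h2 : ((Ub (P α) X εs (tau (P α) X εs ω) : ℤ) : ℝ)
        ≤ ((S X (tau (P α) X εs ω) ω : ℕ) : ℝ) := by exact_mod_cast hle
    linarith
  · rintro ⟨hne, hle⟩
    have hn1 : 1 ≤ tau (P α) X εs ω := Nat.one_le_iff_ne_zero.2 hne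
    have hnpos : (0:ℝ) < (tau (P α) X εs ω : ℝ) := by exact_mod_cast hn1
    simp only [phat, if_neg hne]
    rw [div_lt_iff₀ hnpos]
    have h1 := (hsep _ hn1).2
    have h2 : ((S X (tau (P α) X εs ω) ω : ℕ) : ℝ)
        ≤ ((Lb (P α) X εs (tau (P α) X εs ω) : ℤ) : ℝ) := by exact_mod_cast hle
    linarith


end SeqMC
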